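/- (Tightness example) Let K ≥ 4 and X = (X₁,…,X_m) a random vector with independent coordinates such that X_i²/(K² log K) ~ Bernoulli(1/(K² log K)). Then each ‖X_i‖_{ψ₂} ≤ K, and if m ≥ K² log K, then ‖ ‖X‖₂ − √m ‖_{ψ₂} ≥ c K √(log K) for an absolute constant c > 1/5 (one may take c = 1/√(10 log 10)). -/

import Mathlib

open MeasureTheory ProbabilityTheory

/-- The ψ_α (Orlicz) norm of a real random variable, with the convention `sInf ∅ = ∞`. -/
noncomputable def psiNorm {Ω : Type*} [MeasurableSpace Ω] (μ : Measure Ω) (α : ℝ)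
    (X : Ω → ℝ) : ENNReal :=
  sInf {t : ENNReal | ∃ s : ℝ, 0 < s ∧ t = ENNReal.ofReal s ∧
    (∫⁻ ω, ENNReal.ofReal (Real.exp (|X ω| ^ α / s ^ α)) ∂μ) ≤ 2}

set_option maxHeartbeats 1000000 in
theorem tightness_example {Ω : Type*} [MeasurableSpace Ω] (μ : Measure Ω)
    [IsProbabilityMeasure μ] (m : ℕ) (K : ℝ) (hK : 4 ≤ K)
    (X : Fin m → Ω → ℝ) (hX : ∀ i, Measurable (X i))
    (hind : iIndepFun X μ)
    (hXv : ∀ i, μ {ω | X i ω ^ 2 = K ^ 2 * Real.log K} =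
      ENNReal.ofReal (1 / (K ^ 2 * Real.log K)))
    (hX0 : ∀ i, μ {ω | X i ω = 0} = 1 - ENNReal.ofReal (1 / (K ^ 2 * Real.log K))) :
    (∀ i, psiNorm μ 2 (X i) ≤ ENNReal.ofReal K) ∧
    (1 / 5 : ℝ) < 1 / Real.sqrt (10 * Real.log 10) ∧
    (K ^ 2 * Real.log K ≤ m →
      ENNReal.ofReal (1 / Real.sqrt (10 * Real.log 10) * (K * Real.sqrt (Real.log K))) ≤
        psiNorm μ 2 (fun ω => Real.sqrt (∑ i, X i ω ^ 2) - Real.sqrt m)) := by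
  have hK0 : (0:ℝ) < K := by linarith
  have hlog2 : (0.6931471803:ℝ) < Real.log 2 := Real.log_two_gt_d9
  have hlog4 : (1:ℝ) < Real.log 4 := by
    have h4 : Real.log 4 = 2 * Real.log 2 := by
      rw [show (4:ℝ) = 2^2 by norm_num, Real.log_pow]; push_cast; ring
    linarith
  have hlogK : 1 < Real.log K :=
    lt_of_lt_of_le hlog4 (Real.log_le_log (by norm_num) hK)
  have hKL1 : (1:ℝ) < K^2 * Real.log K := by nlinarith
  have hKL0 : (0:ℝ) < K^2 * Real.log K := by linarith
  set p0 : ℝ := 1 / (K^2 * Real.log K) with hp0def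
  have hp0pos : 0 < p0 := by positivity
  have hp0le : p0 ≤ 1/2 := by
    rw [hp0def, div_le_div_iff₀ hKL0 (by norm_num)]
    nlinarith
  have hp0le1 : p0 ≤ 1 := by linarith
  have hrpow : ∀ x : ℝ, |x| ^ (2:ℝ) = x^2 := fun x => by
    rw [show (2:ℝ) = ((2:ℕ):ℝ) by norm_num, Real.rpow_natCast, sq_abs]
  have hrpow' : ∀ x : ℝ, x ^ (2:ℝ) = x^2 := fun x => by
    rw [show (2:ℝ) = ((2:ℕ):ℝ) by norm_num, Real.rpow_natCast]
  have hL10 : (1:ℝ) < Real.log 10 :=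
    lt_of_lt_of_le hlog4 (Real.log_le_log (by norm_num) (by norm_num))
  refine ⟨?_, ?_, ?_⟩
  · -- Part 1
    intro i
    apply sInf_le
    refine ⟨K, hK0, rfl, ?_⟩
    set A := {ω | X i ω ^ 2 = K ^ 2 * Real.log K} with hAdef
    set B := {ω | X i ω = 0} with hBdef
    have measA : MeasurableSet A := by
      have : A = (fun ω => X i ω ^ 2) ⁻¹' {K ^ 2 * Real.log K} := rfl
      rw [this]
      exact ((hX i).pow_const 2) (measurableSet_singleton _)
    have measB : MeasurableSet B := (hX i) (measurableSet_singleton 0)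
    have hdisj : Disjoint A B := by
      rw [Set.disjoint_left]
      intro ω hA hB
      rw [hAdef, Set.mem_setOf_eq] at hA
      rw [hBdef, Set.mem_setOf_eq] at hB
      rw [hB] at hA
      nlinarith
    have hnull : μ (A ∪ B)ᶜ = 0 := by
      have hU : μ (A ∪ B) = 1 := by
        rw [measure_union hdisj measB, hXv i, hX0 i]
        exact add_tsub_cancel_of_le (by
          rw [← ENNReal.ofReal_one]
          exact ENNReal.ofReal_le_ofReal hp0le1)
      rw [measure_compl (measA.union measB) (measure_ne_top μ _), hU,
        measure_univ, tsub_self]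
    have haemem : ∀ᵐ ω ∂μ, ω ∈ A ∪ B := by
      rw [ae_iff]
      convert hnull using 2
      rfl
    set g : Ω → ENNReal := fun ω =>
      A.indicator (fun _ => ENNReal.ofReal K) ω + B.indicator (fun _ => 1) ω with hgdef
    have hfg : (fun ω => ENNReal.ofReal (Real.exp (|X i ω| ^ (2:ℝ) / K ^ (2:ℝ)))) =ᵐ[μ] g := by
      filter_upwards [haemem] with ω hω
      rcases hω with hA | hB
      · have hx2 : X i ω ^ 2 = K ^ 2 * Real.log K := hA
        have hωB : ω ∉ B := by
          intro hB
          exact hdisj.ne_of_mem hA hB rfl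
        rw [hgdef]
        simp only [Set.indicator_of_mem hA, Set.indicator_of_notMem hωB, add_zero]
        have hdd : K ^ 2 * Real.log K / K ^ 2 = Real.log K := by
          field_simp
        rw [hrpow, hrpow', hx2, hdd, Real.exp_log hK0]
      · have hx0 : X i ω = 0 := hB
        have hωA : ω ∉ A := by
          intro hA
          exact hdisj.ne_of_mem hA hB rfl
        rw [hgdef]
        simp only [Set.indicator_of_notMem hωA, Set.indicator_of_mem hB, zero_add]
        rw [hrpow, hrpow', hx0]
        norm_num
    rw [lintegral_congr_ae hfg, hgdef]
    rw [lintegral_add_left (measurable_const.indicator measA)]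
    rw [lintegral_indicator measA, lintegral_indicator measB,
      setLIntegral_const, setLIntegral_const, hXv i, hX0 i]
    have h1 : ENNReal.ofReal K * ENNReal.ofReal p0 ≤ 1 := by
      rw [← ENNReal.ofReal_mul hK0.le, ← ENNReal.ofReal_one]
      apply ENNReal.ofReal_le_ofReal
      rw [hp0def, mul_one_div, div_le_one hKL0]
      nlinarith
    calc ENNReal.ofReal K * ENNReal.ofReal p0 + 1 * (1 - ENNReal.ofReal p0)
        ≤ 1 + 1 := add_le_add h1 (by rw [one_mul]; exact tsub_le_self.trans le_rfl)
      _ = 2 := one_add_one_eq_two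
  · -- Part 2
    have hlog10 : Real.log 10 < 2.5 := by
      rw [Real.log_lt_iff_lt_exp (by norm_num)]
      have h1 := Real.exp_one_gt_d9
      have h2 : (1.5:ℝ) ≤ Real.exp 0.5 := by
        have := Real.add_one_le_exp (0.5:ℝ); linarith
      have h3 : Real.exp 2.5 = Real.exp 1 * Real.exp 1 * Real.exp 0.5 := by
        rw [← Real.exp_add, ← Real.exp_add]; norm_num
      nlinarith [Real.exp_pos 1, Real.exp_pos 0.5]
    have h10L : (0:ℝ) < 10 * Real.log 10 := by linarith
    have hs5 : Real.sqrt (10 * Real.log 10) < 5 := by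
      rw [Real.sqrt_lt' (by norm_num)]
      nlinarith
    exact one_div_lt_one_div_of_lt (Real.sqrt_pos.2 h10L) hs5
  · -- Part 3
    intro hm
    have h10L : (0:ℝ) < 10 * Real.log 10 := by linarith
    set c : ℝ := 1 / Real.sqrt (10 * Real.log 10) with hcdef
    set T : ℝ := c * (K * Real.sqrt (Real.log K)) with hTdef
    have hcpos : 0 < c := by
      rw [hcdef]; positivity
    have hTpos : 0 < T := by
      rw [hTdef]
      have : 0 < Real.sqrt (Real.log K) := Real.sqrt_pos.2 (by linarith)
      positivity
    apply le_sInf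
    rintro t ⟨s, hs, rfl, hint⟩
    rw [ENNReal.ofReal_le_ofReal_iff hs.le]
    by_contra hlt
    push_neg at hlt
    -- hlt : s < T
    have hm1 : (1:ℝ) < m := lt_of_lt_of_le hKL1 hm
    have hm0 : (0:ℝ) < m := by linarith
    have hTsq : T^2 = K^2 * Real.log K / (10 * Real.log 10) := by
      rw [hTdef, hcdef]
      rw [mul_pow, mul_pow, div_pow, one_pow, Real.sq_sqrt h10L.le,
        Real.sq_sqrt (by linarith : (0:ℝ) ≤ Real.log K)]
      ring
    have hsT : s^2 < T^2 := by nlinarith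
    -- the event that all coordinates vanish
    set E : Set Ω := ⋂ i, X i ⁻¹' ({0} : Set ℝ) with hEdef
    have hEmeas : MeasurableSet E :=
      MeasurableSet.iInter fun i => (hX i) (measurableSet_singleton 0)
    have hE : μ E = (1 - ENNReal.ofReal p0) ^ m := by
      have hprod := hind.measure_inter_preimage_eq_mul Finset.univ
        (sets := fun _ => ({0} : Set ℝ)) (fun i _ => measurableSet_singleton 0)
      have hEeq : E = ⋂ i ∈ Finset.univ, X i ⁻¹' ({0} : Set ℝ) := by
        simp [hEdef]
      rw [hEeq, hprod]
      have : ∀ i : Fin m, μ (X i ⁻¹' ({0} : Set ℝ)) = 1 - ENNReal.ofReal p0 := by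
        intro i
        have : X i ⁻¹' ({0} : Set ℝ) = {ω | X i ω = 0} := rfl
        rw [this, hX0 i]
      rw [Finset.prod_congr rfl (fun i _ => this i), Finset.prod_const,
        Finset.card_univ, Fintype.card_fin]
    have key : ENNReal.ofReal (Real.exp ((m:ℝ)/s^2)) * μ E ≤
        ∫⁻ ω, ENNReal.ofReal (Real.exp
          (|Real.sqrt (∑ i, X i ω ^ 2) - Real.sqrt m| ^ (2:ℝ) / s ^ (2:ℝ))) ∂μ := by
      calc ENNReal.ofReal (Real.exp ((m:ℝ)/s^2)) * μ E
          = ∫⁻ _ in E, ENNReal.ofReal (Real.exp ((m:ℝ)/s^2)) ∂μ :=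
            (setLIntegral_const E _).symm
        _ ≤ ∫⁻ ω in E, ENNReal.ofReal (Real.exp
              (|Real.sqrt (∑ i, X i ω ^ 2) - Real.sqrt m| ^ (2:ℝ) / s ^ (2:ℝ))) ∂μ := by
            apply setLIntegral_mono' hEmeas
            intro ω hω
            have hzero : ∀ i : Fin m, X i ω = 0 := by
              intro i
              have := Set.mem_iInter.mp hω i
              simpa using this
            have hsum : (∑ i, X i ω ^ 2) = 0 := by
              apply Finset.sum_eq_zero
              intro i _
              rw [hzero i]; ring
            rw [hsum, Real.sqrt_zero, zero_sub, abs_neg,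
              abs_of_nonneg (Real.sqrt_nonneg _), hrpow' (Real.sqrt (m:ℝ)), hrpow' s,
              Real.sq_sqrt (by positivity : (0:ℝ) ≤ (m:ℝ))]
        _ ≤ _ := setLIntegral_le_lintegral E _
    have hchain : ENNReal.ofReal (Real.exp ((m:ℝ)/s^2) * (1-p0)^m) ≤ 2 := by
      calc ENNReal.ofReal (Real.exp ((m:ℝ)/s^2) * (1-p0)^m)
          = ENNReal.ofReal (Real.exp ((m:ℝ)/s^2)) * ENNReal.ofReal ((1-p0)^m) :=
            ENNReal.ofReal_mul (Real.exp_pos _).le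
        _ = ENNReal.ofReal (Real.exp ((m:ℝ)/s^2)) * (1 - ENNReal.ofReal p0)^m := by
            rw [ENNReal.ofReal_pow (by linarith : (0:ℝ) ≤ 1 - p0),
              ENNReal.ofReal_sub 1 hp0pos.le, ENNReal.ofReal_one]
        _ = ENNReal.ofReal (Real.exp ((m:ℝ)/s^2)) * μ E := by rw [hE]
        _ ≤ _ := key.trans hint
    have hreal : Real.exp ((m:ℝ)/s^2) * (1-p0)^m ≤ 2 := by
      have h2 : (2 : ENNReal) = ENNReal.ofReal 2 := by norm_num
      rw [h2] at hchain
      exact (ENNReal.ofReal_le_ofReal_iff (by norm_num)).mp hchain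
    -- now derive the real contradiction
    have hkey1 : 10 * Real.log 10 * p0 * T^2 = 1 := by
      rw [hTsq, hp0def]
      field_simp
    have hp0m : 1 ≤ p0 * m := by
      have h1 : p0 * (K^2 * Real.log K) = 1 := by
        rw [hp0def]; field_simp
      nlinarith
    have hdiv : 10 * Real.log 10 * (p0 * (m:ℝ)) < (m:ℝ)/s^2 := by
      rw [lt_div_iff₀ (by positivity : (0:ℝ) < s^2)]
      have h1 : 10 * Real.log 10 * (p0 * m) * s^2 < 10 * Real.log 10 * (p0 * m) * T^2 := by
        apply mul_lt_mul_of_pos_left hsT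
        positivity
      have h2 : 10 * Real.log 10 * (p0 * (m:ℝ)) * T^2 = m := by
        linear_combination (m:ℝ) * hkey1
      linarith
    have hexp1 : 1 < (m:ℝ)/s^2 - 2*p0*m := by
      have h0 : (0:ℝ) ≤ p0 * m := by positivity
      have h3 : 10 * (p0 * (m:ℝ)) ≤ 10 * Real.log 10 * (p0 * m) := by
        nlinarith [mul_le_mul_of_nonneg_right hL10.le h0]
      linarith
    -- (1-p0)^m ≥ exp(-2 p0 m)
    have hE2 : Real.exp (-(2*p0)) * Real.exp (2*p0) = 1 := by
      rw [← Real.exp_add]; simp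
    have h2exp : (1:ℝ) + 2*p0 ≤ Real.exp (2*p0) := by
      have := Real.add_one_le_exp (2*p0); linarith
    have h1p : Real.exp (-(2*p0)) ≤ 1 - p0 := by
      nlinarith [Real.exp_pos (2*p0), Real.exp_pos (-(2*p0))]
    have e1 : Real.exp (-(2*p0)) ^ m ≤ (1-p0)^m :=
      pow_le_pow_left₀ (Real.exp_pos _).le h1p m
    have e2 : Real.exp (-(2*p0))^m = Real.exp ((m:ℝ) * (-(2*p0))) :=
      (Real.exp_nat_mul _ m).symm
    have e4 : 2 < Real.exp ((m:ℝ)/s^2 - 2*p0*m) := by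
      have := Real.add_one_le_exp ((m:ℝ)/s^2 - 2*p0*m); linarith
    have e5 : Real.exp ((m:ℝ)/s^2 - 2*p0*m) =
        Real.exp ((m:ℝ)/s^2) * Real.exp ((m:ℝ) * (-(2*p0))) := by
      rw [← Real.exp_add]; ring_nf
    have : 2 < Real.exp ((m:ℝ)/s^2) * (1-p0)^m := by
      calc (2:ℝ) < Real.exp ((m:ℝ)/s^2 - 2*p0*m) := e4
        _ = Real.exp ((m:ℝ)/s^2) * Real.exp ((m:ℝ) * (-(2*p0))) := e5
        _ = Real.exp ((m:ℝ)/s^2) * Real.exp (-(2*p0))^m := by rw [e2]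
        _ ≤ Real.exp ((m:ℝ)/s^2) * (1-p0)^m := by
            apply mul_le_mul_of_nonneg_left e1 (Real.exp_pos _).le
    linarith
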